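/- Let b₁, b₂, b₃, … be a sequence of nonzero integers forming a rigid divisibility sequence, meaning: (1) for every prime q and all n, m ≥ 1, if q divides b_n then v_q(b_{mn}) = v_q(b_n); and (2) for every prime q and all n, m ≥ 1, min(v_q(b_n), v_q(b_m)) ≤ v_q(b_{gcd(m,n)}). Then for every n ≥ 1 and every prime q: the sum ∑_{m | n} μ(n/m) · v_q(b_m) over the positive divisors m of n (μ being the Möbius function) equals v_q(b_n) if q divides b_n and q does not divide b_m for any 1 ≤ m < n, and equals 0 otherwise. (Equivalently, the product ∏_{m | n} b_m^{μ(n/m)} generates the primitive part of b_n: the largest divisor of b_n supported on primes not dividing any earlier term, each appearing with its full multiplicity in b_n.) -/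

import Mathlib

open ArithmeticFunction in
/-- Let `b₁, b₂, …` be nonzero integers forming a rigid divisibility
sequence: (1) if a prime `q` divides `b n` then `v_q(b (m*n)) = v_q(b n)`, and
(2) `min(v_q(b n), v_q(b m)) ≤ v_q(b gcd(m,n))`. Then for every `n ≥ 1` and prime `q`, the sum
`∑_{m ∣ n} μ(n/m)·v_q(b m)` equals `v_q(b n)` if `q` divides `b n` primitively (i.e. `q ∣ b n`
but `q ∤ b m` for all `1 ≤ m < n`), and equals `0` otherwise. -/
theorem stmt_18 (b : ℕ → ℤ) (hb : ∀ n : ℕ, 1 ≤ n → b n ≠ 0)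
    (h1 : ∀ q : ℕ, q.Prime → ∀ n m : ℕ, 1 ≤ n → 1 ≤ m → (q : ℤ) ∣ b n →
      padicValInt q (b (m * n)) = padicValInt q (b n))
    (h2 : ∀ q : ℕ, q.Prime → ∀ n m : ℕ, 1 ≤ n → 1 ≤ m →
      min (padicValInt q (b n)) (padicValInt q (b m)) ≤ padicValInt q (b (Nat.gcd m n))) :
    ∀ n : ℕ, 1 ≤ n → ∀ q : ℕ, q.Prime →
      (((q : ℤ) ∣ b n ∧ ∀ m : ℕ, 1 ≤ m → m < n → ¬ (q : ℤ) ∣ b m) →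
        ∑ m ∈ n.divisors, (moebius (n / m) : ℤ) * (padicValInt q (b m) : ℤ)
          = (padicValInt q (b n) : ℤ)) ∧
      ((¬ ((q : ℤ) ∣ b n ∧ ∀ m : ℕ, 1 ≤ m → m < n → ¬ (q : ℤ) ∣ b m)) →
        ∑ m ∈ n.divisors, (moebius (n / m) : ℤ) * (padicValInt q (b m) : ℤ) = 0) := by
  intro n hn q hq
  haveI : Fact q.Prime := ⟨hq⟩
  have hn0 : n ≠ 0 := by omega
  have hdvd : ∀ m : ℕ, 1 ≤ m → (((q : ℤ) ∣ b m) ↔ 1 ≤ padicValInt q (b m)) := by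
    intro m hm
    rw [show ((q : ℤ) ∣ b m) ↔ (q : ℤ) ^ 1 ∣ b m by rw [pow_one], padicValInt_dvd_iff]
    simp [hb m hm]
  have hmoeb : ∀ k : ℕ, (∑ d ∈ k.divisors, (moebius d : ℤ)) = if k = 1 then 1 else 0 := by
    intro k
    have h := ArithmeticFunction.coe_mul_zeta_apply
      (f := ArithmeticFunction.moebius) (x := k)
    rw [ArithmeticFunction.moebius_mul_coe_zeta, ArithmeticFunction.one_apply] at h
    exact h.symm
  by_cases hex : ∃ m, 1 ≤ m ∧ (q : ℤ) ∣ b m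
  · classical
    set r := Nat.find hex with hrdef
    obtain ⟨hr1, hrq⟩ : 1 ≤ r ∧ (q : ℤ) ∣ b r := Nat.find_spec hex
    have hrmin : ∀ m, m < r → ¬(1 ≤ m ∧ (q : ℤ) ∣ b m) := fun m hm => Nat.find_min hex hm
    have hval : ∀ m : ℕ, 1 ≤ m → r ∣ m → padicValInt q (b m) = padicValInt q (b r) := by
      rintro m hm ⟨k, rfl⟩
      have hk1 : 1 ≤ k := by
        rcases Nat.eq_zero_or_pos k with rfl | h
        · simp at hm
        · exact h
      rw [mul_comm]
      exact h1 q hq r k hr1 hk1 hrq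
    have hiff : ∀ m : ℕ, 1 ≤ m → (((q : ℤ) ∣ b m) ↔ r ∣ m) := by
      intro m hm
      constructor
      · intro hqm
        have hg1 : 1 ≤ Nat.gcd m r := Nat.gcd_pos_of_pos_right m hr1
        have hle := h2 q hq r m hr1 hm
        have hgq : (q : ℤ) ∣ b (Nat.gcd m r) := by
          rw [hdvd _ hg1]
          have h1' := (hdvd r hr1).mp hrq
          have h2' := (hdvd m hm).mp hqm
          omega
        have hgr : Nat.gcd m r ≤ r := Nat.le_of_dvd hr1 (Nat.gcd_dvd_right m r)
        have hne : ¬ Nat.gcd m r < r := fun h => hrmin _ h ⟨hg1, hgq⟩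
        have heq : Nat.gcd m r = r := by omega
        exact heq ▸ Nat.gcd_dvd_left m r
      · intro hrm
        rw [hdvd m hm, hval m hm hrm, ← hdvd r hr1]
        exact hrq
    by_cases hrn : r ∣ n
    · -- rewrite the sum
      have hS : ∑ m ∈ n.divisors, (moebius (n / m) : ℤ) * (padicValInt q (b m) : ℤ)
          = (if n / r = 1 then 1 else 0) * (padicValInt q (b r) : ℤ) := by
        have step1 : ∑ m ∈ n.divisors, (moebius (n / m) : ℤ) * (padicValInt q (b m) : ℤ)
            = ∑ d ∈ n.divisors, (moebius d : ℤ) * (padicValInt q (b (n / d)) : ℤ) := by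
          rw [← Nat.sum_div_divisors n
            (fun d => (moebius d : ℤ) * (padicValInt q (b (n / d)) : ℤ))]
          refine Finset.sum_congr rfl fun m hm => ?_
          rw [Nat.div_div_self (Nat.mem_divisors.mp hm).1 hn0]
        rw [step1]
        have step2 : ∀ d ∈ n.divisors,
            (moebius d : ℤ) * (padicValInt q (b (n / d)) : ℤ)
            = if d ∣ n / r then (moebius d : ℤ) * (padicValInt q (b r) : ℤ) else 0 := by
          intro d hd
          obtain ⟨hdn, -⟩ := Nat.mem_divisors.mp hd
          have hnd1 : 1 ≤ n / d := Nat.one_le_div_iff (Nat.pos_of_mem_divisors hd) |>.mpr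
            (Nat.le_of_dvd (by omega) hdn)
          have hequiv : d ∣ n / r ↔ r ∣ n / d := by
            rw [Nat.dvd_div_iff_mul_dvd hrn, Nat.dvd_div_iff_mul_dvd hdn, mul_comm]
          by_cases hcase : d ∣ n / r
          · rw [if_pos hcase, hval (n / d) hnd1 (hequiv.mp hcase)]
          · rw [if_neg hcase]
            have : ¬ (q : ℤ) ∣ b (n / d) := fun h => hcase (hequiv.mpr ((hiff _ hnd1).mp h))
            rw [padicValInt.eq_zero_of_not_dvd this]
            simp
        rw [Finset.sum_congr rfl step2, ← Finset.sum_filter,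
          Nat.divisors_filter_dvd_of_dvd hn0 (Nat.div_dvd_of_dvd hrn),
          ← Finset.sum_mul, hmoeb]
      have hnr_eq : n / r = 1 ↔ n = r := by
        constructor
        · intro h
          have h2 := Nat.mul_div_cancel' hrn
          rw [h, mul_one] at h2
          omega
        · intro h; subst h; exact Nat.div_self hr1
      by_cases hnr : n = r
      · constructor
        · intro _
          rw [hS, if_pos (hnr_eq.mpr hnr), one_mul, hnr]
        · intro hcon
          exfalso
          exact hcon ⟨hnr ▸ hrq, fun m hm1 hm2 hm3 => hrmin m (by omega) ⟨hm1, hm3⟩⟩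
      · have hrlt : r < n := lt_of_le_of_ne (Nat.le_of_dvd hn hrn) fun h => hnr h.symm
        constructor
        · intro hcon
          exact absurd hrq (hcon.2 r hr1 hrlt)
        · intro _
          rw [hS, if_neg (fun h => hnr (hnr_eq.mp h)), zero_mul]
    · -- r does not divide n : q ∤ b m for all m ∣ n
      have hzero : ∀ m ∈ n.divisors, (moebius (n / m) : ℤ) * (padicValInt q (b m) : ℤ) = 0 := by
        intro m hm
        obtain ⟨hmn, -⟩ := Nat.mem_divisors.mp hm
        have hm1 : 1 ≤ m := Nat.pos_of_mem_divisors hm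
        have : ¬ (q : ℤ) ∣ b m := fun h => hrn (dvd_trans ((hiff m hm1).mp h) hmn)
        rw [padicValInt.eq_zero_of_not_dvd this]
        simp
      have hS0 : ∑ m ∈ n.divisors, (moebius (n / m) : ℤ) * (padicValInt q (b m) : ℤ) = 0 :=
        Finset.sum_eq_zero hzero
      have hnq : ¬ (q : ℤ) ∣ b n := fun h => hrn ((hiff n hn).mp h)
      exact ⟨fun h' => absurd h'.1 hnq, fun _ => hS0⟩
  · push_neg at hex
    have hzero : ∀ m ∈ n.divisors, (moebius (n / m) : ℤ) * (padicValInt q (b m) : ℤ) = 0 := by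
      intro m hm
      have hm1 : 1 ≤ m := Nat.pos_of_mem_divisors hm
      rw [padicValInt.eq_zero_of_not_dvd (hex m hm1)]
      simp
    exact ⟨fun h' => absurd h'.1 (hex n hn), fun _ => Finset.sum_eq_zero hzero⟩
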